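/- Let μ* be an upward continuous outer measure on a set X with 0 < μ*(X), and assume 𝔬(X, μ*) = |X| = 𝔟. Then GES(X, μ*) fails. -/

import Mathlib

open MeasureTheory Filter Set

/-- Eventual domination: `α ≤* β` iff `α n ≤ β n` for all but finitely many `n`. -/
def EvDom (α β : ℕ → ℕ) : Prop := ∀ᶠ n in atTop, α n ≤ β n

/-- The bounding number `𝔟`: the least cardinality of a family of sequences unbounded
in the eventual-domination order. -/
noncomputable def bNum : Cardinal :=
  sInf {c | ∃ S : Set (ℕ → ℕ), ¬ (∃ β, ∀ α ∈ S, EvDom α β) ∧ Cardinal.mk S = c}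

/-- `μ` is an upward continuous outer measure. -/
def UpCont {X : Type*} (μ : OuterMeasure X) : Prop :=
  ∀ A : ℕ → Set X,
    Tendsto (fun n => μ (⋃ k < n, A k)) atTop (nhds (μ (⋃ n, A n)))

/-- `GES(X, μ*)`: for every pointwise vanishing sequence `F` of real-valued functions on
`X` and each `M < μ*(X)` there is `A ⊆ X` with `μ*(A) > M` on which `F` converges
uniformly to `0`. -/
def GES {X : Type*} (μ : OuterMeasure X) : Prop :=
  ∀ F : ℕ → X → ℝ, (∀ x, Tendsto (fun n => F n x) atTop (nhds 0)) →
    ∀ M < μ Set.univ, ∃ A : Set X, M < μ A ∧ TendstoUniformlyOn F 0 atTop A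

/-- `𝔬(X, μ*)`: the least cardinality of a subset of `X` of full outer measure. -/
noncomputable def oNum {X : Type*} (μ : OuterMeasure X) : Cardinal :=
  sInf {c | ∃ Y : Set X, μ Y = μ Set.univ ∧ Cardinal.mk Y = c}


section Aux
open Cardinal Ordinal

lemma evDom_trans {a b c : ℕ → ℕ} (h1 : EvDom a b) (h2 : EvDom b c) : EvDom a c :=
  h1.mp (h2.mono fun _ h2 h1 => h1.trans h2)

lemma evDom_of_le {a b : ℕ → ℕ} (h : ∀ n, a n ≤ b n) : EvDom a b := Eventually.of_forall h

lemma countable_bounded {S : Set (ℕ → ℕ)} (hS : S.Countable) : ∃ β, ∀ α ∈ S, EvDom α β := by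
  rcases S.eq_empty_or_nonempty with rfl | hne
  · exact ⟨id, fun α h => h.elim⟩
  obtain ⟨f, rfl⟩ := hS.exists_eq_range hne
  refine ⟨fun n => (Finset.range (n+1)).sup (fun k => f k n), ?_⟩
  rintro α ⟨k, rfl⟩
  filter_upwards [eventually_ge_atTop k] with n hn
  exact Finset.le_sup (f := fun k => f k n) (Finset.mem_range.mpr (by omega))

lemma bNum_set_nonempty :
    {c | ∃ S : Set (ℕ → ℕ), ¬ (∃ β, ∀ α ∈ S, EvDom α β) ∧ Cardinal.mk S = c}.Nonempty := by
  refine ⟨_, Set.univ, ?_, rfl⟩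
  rintro ⟨β, hβ⟩
  obtain ⟨n, hn⟩ := (hβ (fun n => β n + 1) trivial).exists
  simp at hn

lemma aleph0_le_bNum : ℵ₀ ≤ bNum := by
  refine le_csInf bNum_set_nonempty ?_
  rintro c ⟨S, hS, rfl⟩
  by_contra h
  exact hS (countable_bounded (Set.countable_coe_iff.mp
    (Cardinal.mk_le_aleph0_iff.mp (le_of_lt (not_le.mp h)))))

lemma small_bounded {S : Set (ℕ → ℕ)} (h : Cardinal.mk S < bNum) :
    ∃ β, ∀ α ∈ S, EvDom α β := by
  by_contra hc
  have : bNum ≤ Cardinal.mk S := csInf_le' ⟨S, hc, rfl⟩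
  exact absurd this (not_le.mpr h)

instance : IsWellOrder bNum.ord.ToType (· < ·) := isWellOrder_lt

lemma seg_small (ξ : bNum.ord.ToType) : #{η : bNum.ord.ToType // η < ξ} < bNum := by
  have h1 : Ordinal.typein (α := bNum.ord.ToType) (· < ·) ξ <
      Ordinal.type (α := bNum.ord.ToType) (· < ·) := Ordinal.typein_lt_type _ ξ
  rw [type_toType] at h1
  have h2 := Cardinal.lt_ord.mp h1
  exact h2

lemma seg_range_small {ξ : bNum.ord.ToType} (ih : ∀ η, η < ξ → ℕ → ℕ) :
    #(Set.range fun η : {η // η < ξ} => ih η.1 η.2) < bNum :=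
  lt_of_le_of_lt Cardinal.mk_range_le (seg_small ξ)

noncomputable def scaleStep (u : bNum.ord.ToType → ℕ → ℕ) (ξ : bNum.ord.ToType)
    (ih : ∀ η, η < ξ → ℕ → ℕ) : ℕ → ℕ :=
  fun n => n + 1 + (Finset.range (n+1)).sup fun m =>
    max (Classical.choose (small_bounded (seg_range_small ih)) m) (u ξ m)

noncomputable def scale (u : bNum.ord.ToType → ℕ → ℕ) : bNum.ord.ToType → ℕ → ℕ :=
  (wellFounded_lt).fix (scaleStep u)

lemma scale_eq (u : bNum.ord.ToType → ℕ → ℕ) (ξ : bNum.ord.ToType) :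
    scale u ξ = scaleStep u ξ (fun η _ => scale u η) :=
  WellFounded.fix_eq _ _ _

end Aux

section Aux2
open Cardinal Ordinal

lemma aux_step_lt (f : ℕ → ℕ) (n : ℕ) :
    n + 1 + (Finset.range (n+1)).sup f < n + 1 + 1 + (Finset.range (n+1+1)).sup f := by
  have h : (Finset.range (n+1)).sup f ≤ (Finset.range (n+1+1)).sup f :=
    Finset.sup_mono (Finset.range_subset_range.mpr (by omega))
  omega

lemma scale_b_le (u : bNum.ord.ToType → ℕ → ℕ) (ξ : bNum.ord.ToType) (n : ℕ) :
    max (Classical.choose (small_bounded (seg_range_small (fun η (_ : η < ξ) => scale u η))) n)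
      (u ξ n) ≤ scale u ξ n := by
  rw [scale_eq]
  simp only [scaleStep]
  exact le_trans (Finset.le_sup (f := fun m =>
    max (Classical.choose (small_bounded (seg_range_small (fun η (_ : η < ξ) => scale u η))) m)
      (u ξ m)) (Finset.self_mem_range_succ n)) (Nat.le_add_left _ _)

lemma scale_lt (u : bNum.ord.ToType → ℕ → ℕ) (ξ : bNum.ord.ToType) (n : ℕ) :
    n < scale u ξ n := by
  rw [scale_eq]
  simp only [scaleStep]
  omega

lemma scale_u_le (u : bNum.ord.ToType → ℕ → ℕ) (ξ : bNum.ord.ToType) (n : ℕ) :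
    u ξ n ≤ scale u ξ n :=
  le_trans (le_max_right _ _) (scale_b_le u ξ n)

lemma scale_strictMono (u : bNum.ord.ToType → ℕ → ℕ) (ξ : bNum.ord.ToType) :
    StrictMono (scale u ξ) := by
  apply strictMono_nat_of_lt_succ
  intro n
  rw [scale_eq]
  simp only [scaleStep]
  exact aux_step_lt _ n

lemma scale_evDom (u : bNum.ord.ToType → ℕ → ℕ) {η ξ : bNum.ord.ToType} (h : η < ξ) :
    EvDom (scale u η) (scale u ξ) := by
  have hb := Classical.choose_spec (small_bounded (seg_range_small (fun η (_ : η < ξ) => scale u η)))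
  have h1 : EvDom (scale u η)
      (Classical.choose (small_bounded (seg_range_small (fun η (_ : η < ξ) => scale u η)))) :=
    hb _ ⟨⟨η, h⟩, rfl⟩
  exact evDom_trans h1 (evDom_of_le fun n => le_trans (le_max_left _ _) (scale_b_le u ξ n))

end Aux2

section Aux3

def cnt (a : ℕ → ℕ) (n : ℕ) : ℕ := ((Finset.range (n+1)).filter fun k => a k ≤ n).card

lemma cnt_lower {a : ℕ → ℕ} (hsm : StrictMono a) {m n : ℕ} (h : a m ≤ n) : m + 1 ≤ cnt a n := by
  have hsub : Finset.range (m+1) ⊆ (Finset.range (n+1)).filter (fun k => a k ≤ n) := by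
    intro k hk
    simp only [Finset.mem_range, Finset.mem_filter] at *
    have hkm : k ≤ m := by omega
    have h1 : a k ≤ a m := hsm.monotone hkm
    have h2 : k ≤ a k := hsm.le_apply
    omega
  calc m + 1 = (Finset.range (m+1)).card := (Finset.card_range _).symm
    _ ≤ _ := Finset.card_le_card hsub

lemma cnt_upper {a : ℕ → ℕ} (hsm : StrictMono a) {m n : ℕ} (h : n < a m) : cnt a n ≤ m := by
  have hsub : (Finset.range (n+1)).filter (fun k => a k ≤ n) ⊆ Finset.range m := by
    intro k hk
    simp only [Finset.mem_range, Finset.mem_filter] at *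
    by_contra hc
    have : a m ≤ a k := hsm.monotone (by omega)
    omega
  calc cnt a n ≤ (Finset.range m).card := Finset.card_le_card hsub
    _ = m := Finset.card_range m

lemma tendsto_cnt_inv {a : ℕ → ℕ} (hsm : StrictMono a) :
    Tendsto (fun n => 1 / ((cnt a n : ℝ) + 1)) atTop (nhds 0) := by
  have h1 : Tendsto (cnt a) atTop atTop := by
    apply tendsto_atTop_atTop.mpr
    intro m
    exact ⟨a m, fun n hn => le_trans (Nat.le_succ m) (cnt_lower hsm hn)⟩
  exact tendsto_one_div_add_atTop_nhds_zero_nat.comp h1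

lemma unif_bound {X : Type*} {α : X → ℕ → ℕ} (hsm : ∀ x, StrictMono (α x)) {A : Set X}
    (h : TendstoUniformlyOn (fun n x => 1 / ((cnt (α x) n : ℝ) + 1)) 0 atTop A) :
    ∃ β : ℕ → ℕ, ∀ x ∈ A, ∀ m, α x m ≤ β m := by
  have key : ∀ m : ℕ, ∃ N : ℕ, ∀ x ∈ A, α x m ≤ N := by
    intro m
    have hε : (0:ℝ) < 1 / ((m:ℝ) + 1) := by positivity
    obtain ⟨N, hN⟩ := ((Metric.tendstoUniformlyOn_iff.mp h) (1 / ((m:ℝ)+1)) hε).exists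
    refine ⟨N, fun x hx => ?_⟩
    have hd := hN x hx
    simp only [Pi.zero_apply, Real.dist_eq, zero_sub, abs_neg] at hd
    rw [abs_of_nonneg (by positivity)] at hd
    have hpos' : (0:ℝ) < (cnt (α x) N : ℝ) + 1 := by positivity
    have h3 : (m:ℝ) + 1 < (cnt (α x) N : ℝ) + 1 := lt_of_one_div_lt_one_div hpos' hd
    have h4 : m < cnt (α x) N := by exact_mod_cast (by linarith : ((m:ℝ)) < (cnt (α x) N : ℝ))
    by_contra hc
    have := cnt_upper (hsm x) (show N < α x m by omega)
    omega
  choose β hβ using key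
  exact ⟨β, fun x hx m => hβ m x hx⟩

end Aux3

section Main
open Cardinal Ordinal

theorem stmt10' {X : Type u} (μ : OuterMeasure X) 
    (hpos : 0 < μ Set.univ)
    (ho : (sInf {c | ∃ Y : Set X, μ Y = μ Set.univ ∧ Cardinal.mk Y = c}) = Cardinal.mk X)
    (hb : Cardinal.lift.{0} (Cardinal.mk X) = Cardinal.lift.{u} bNum) :
    ¬ (∀ F : ℕ → X → ℝ, (∀ x, Tendsto (fun n => F n x) atTop (nhds 0)) →
      ∀ M < μ Set.univ, ∃ A : Set X, M < μ A ∧ TendstoUniformlyOn F 0 atTop A) := by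
  intro hG
  -- an unbounded family enumerated along bNum.ord.ToType
  obtain ⟨S₀, hS₀, hmk⟩ := csInf_mem bNum_set_nonempty
  have htypemk : Cardinal.mk bNum.ord.ToType = bNum := by rw [mk_toType, card_ord]
  have he₀ : Nonempty (S₀ ≃ bNum.ord.ToType) := Cardinal.eq.mp (hmk.trans htypemk.symm)
  obtain ⟨e₀⟩ := he₀
  set uu : bNum.ord.ToType → ℕ → ℕ := fun ξ => (e₀.symm ξ : ℕ → ℕ) with huu
  have hu : ∀ β, ∃ ξ, ¬ EvDom (uu ξ) β := by
    intro β
    by_contra h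
    push_neg at h
    apply hS₀
    refine ⟨β, fun a ha => ?_⟩
    simpa [huu] using h (e₀ ⟨a, ha⟩)
  have hseg : ∀ β : ℕ → ℕ, ∃ ξ₀, ∀ ξ, EvDom (scale uu ξ) β → ξ ≤ ξ₀ := by
    intro β
    obtain ⟨ξ₀, hξ₀⟩ := hu β
    refine ⟨ξ₀, fun ξ hξ => ?_⟩
    by_contra hc
    exact hξ₀ (evDom_trans (evDom_of_le (scale_u_le uu ξ₀))
      (evDom_trans (scale_evDom uu (not_le.mp hc)) hξ))
  -- enumeration of X
  have heX : Nonempty (X ≃ bNum.ord.ToType) := by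
    apply Cardinal.lift_mk_eq'.mp
    rw [htypemk, hb]
  obtain ⟨eX⟩ := heX
  -- the function sequence
  set F : ℕ → X → ℝ := fun n x => 1 / ((cnt (scale uu (eX x)) n : ℝ) + 1) with hF
  have hF0 : ∀ x, Tendsto (fun n => F n x) atTop (nhds 0) :=
    fun x => tendsto_cnt_inv (scale_strictMono uu (eX x))
  -- approximating sequence of measures
  obtain ⟨Ms, _, hMmem, hMtend⟩ := exists_seq_strictMono_tendsto' hpos
  choose A hA1 hA2 using fun n => hG F hF0 (Ms n) (hMmem n).2
  set B : Set X := ⋃ n, A n with hB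
  have hBfull : μ B = μ Set.univ := by
    refine le_antisymm (measure_mono (Set.subset_univ _)) ?_
    exact le_of_tendsto' hMtend fun n =>
      le_trans (hA1 n).le (measure_mono (Set.subset_iUnion A n))
  -- a single eventual bound on B
  choose βs hβs using fun n => unif_bound (fun x => scale_strictMono uu (eX x)) (hA2 n)
  set βU : ℕ → ℕ := fun m => (Finset.range (m+1)).sup fun j => βs j m with hβU
  have hEvB : ∀ x ∈ B, EvDom (scale uu (eX x)) βU := by
    intro x hx
    obtain ⟨n, hn⟩ := Set.mem_iUnion.mp hx
    filter_upwards [eventually_ge_atTop n] with m hm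
    exact le_trans (hβs n x hn m)
      (Finset.le_sup (f := fun j => βs j m) (Finset.mem_range.mpr (by omega)))
  obtain ⟨ξ₀, hξ₀⟩ := hseg βU
  -- cardinality contradiction
  have hemb : Nonempty (↥B ↪ ↥{ξ : bNum.ord.ToType | ξ ≤ ξ₀}) := by
    refine ⟨⟨fun x => ⟨eX x.1, hξ₀ _ (hEvB x.1 x.2)⟩, ?_⟩⟩
    intro a b hab
    exact Subtype.ext (eX.injective (congrArg Subtype.val hab))
  have h2 : Cardinal.mk ↥{ξ : bNum.ord.ToType | ξ ≤ ξ₀} < bNum := by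
    have hins : {ξ : bNum.ord.ToType | ξ ≤ ξ₀} = insert ξ₀ {ξ | ξ < ξ₀} := by
      ext ζ
      simp [le_iff_lt_or_eq, or_comm]
    rw [hins]
    refine lt_of_le_of_lt (Cardinal.mk_insert_le) ?_
    exact Cardinal.add_lt_of_lt aleph0_le_bNum (seg_small ξ₀)
      (Cardinal.one_lt_aleph0.trans_le aleph0_le_bNum)
  have h3 : Cardinal.mk X ≤ Cardinal.mk ↥B := by
    rw [← ho]
    exact csInf_le' ⟨B, hBfull, rfl⟩
  have h1 : Cardinal.lift.{0} (Cardinal.mk ↥B) ≤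
      Cardinal.lift.{u} (Cardinal.mk ↥{ξ : bNum.ord.ToType | ξ ≤ ξ₀}) :=
    Cardinal.lift_mk_le'.mpr hemb
  have hfinal : Cardinal.lift.{0} (Cardinal.mk X) < Cardinal.lift.{0} (Cardinal.mk X) := by
    calc Cardinal.lift.{0} (Cardinal.mk X) ≤ Cardinal.lift.{0} (Cardinal.mk ↥B) :=
          Cardinal.lift_le.mpr h3
      _ ≤ Cardinal.lift.{u} (Cardinal.mk ↥{ξ : bNum.ord.ToType | ξ ≤ ξ₀}) := h1
      _ < Cardinal.lift.{u} bNum := Cardinal.lift_lt.mpr h2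
      _ = Cardinal.lift.{0} (Cardinal.mk X) := hb.symm
  exact absurd hfinal (lt_irrefl _)

end Main

/-- If `0 < μ*(X)` and `𝔬(X, μ*) = |X| = 𝔟`, then `GES(X, μ*)`
fails. -/
theorem stmt10 {X : Type u} (μ : OuterMeasure X) (hμ : UpCont μ)
    (hpos : 0 < μ Set.univ)
    (ho : oNum μ = Cardinal.mk X)
    (hb : Cardinal.lift.{0} (Cardinal.mk X) = Cardinal.lift.{u} bNum) :
    ¬ GES μ := by
  intro hG
  exact stmt10' μ hpos ho hb hG
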